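/- For each fixed s, the zero-function a ↦ φ_a(s) is decreasing for a ≥ 0: if 0 ≤ a₁ < a₂ and φ_{a₁}(s) is finite, then φ_{a₂}(s) ≤ φ_{a₁}(s), with strict inequality when both are finite. -/

import Mathlib

open Set Filter Topology intervalIntegral Real

lemma pos_right_of_deriv_pos {u : ℝ → ℝ} {s d : ℝ} (h : HasDerivAt u d s)
    (hu : u s = 0) (hd : 0 < d) : ∃ δ > 0, ∀ t ∈ Set.Ioo s (s + δ), 0 < u t := by
  have h' := hasDerivAt_iff_tendsto_slope.1 h
  have hev : ∀ᶠ t in 𝓝[≠] s, 0 < slope u s t := h'.eventually (lt_mem_nhds hd)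
  rw [eventually_nhdsWithin_iff, Metric.eventually_nhds_iff] at hev
  obtain ⟨δ, hδ, hδ'⟩ := hev
  refine ⟨δ, hδ, fun t ht => ?_⟩
  have hts : t ≠ s := ne_of_gt ht.1
  have hdist : dist t s < δ := by
    rw [Real.dist_eq, abs_of_pos (by linarith [ht.1])]
    linarith [ht.2]
  have := hδ' hdist hts
  rw [slope_def_field, div_pos_iff] at this
  rcases this with ⟨h1, h2⟩ | ⟨h1, h2⟩
  · simpa [hu] using h1
  · exfalso; rw [sub_neg] at h2; exact absurd ht.1 (not_lt.2 h2.le)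

lemma pos_on_Ioo {u : ℝ → ℝ} {s T : ℝ} (hc : Continuous u) {d : ℝ}
    (h : HasDerivAt u d s) (hu : u s = 0) (hd : 0 < d)
    (hnz : ∀ t ∈ Set.Ioo s T, u t ≠ 0) : ∀ t ∈ Set.Ioo s T, 0 < u t := by
  obtain ⟨δ, hδ, hpos⟩ := pos_right_of_deriv_pos h hu hd
  intro t ht
  by_cases htδ : t < s + δ
  · exact hpos t ⟨ht.1, htδ⟩
  · push_neg at htδ
    have hrt : s + δ / 2 < t := by linarith
    have hrpos : 0 < u (s + δ / 2) := hpos _ ⟨by linarith, by linarith⟩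
    rcases lt_trichotomy (u t) 0 with hneg | hzero | hposn
    · exfalso
      have h0 : (0:ℝ) ∈ Set.Icc (u t) (u (s + δ / 2)) := ⟨hneg.le, hrpos.le⟩
      obtain ⟨c, hc1, hc2⟩ := intermediate_value_Icc' hrt.le hc.continuousOn h0
      have hcmem : c ∈ Set.Ioo s T := ⟨by linarith [hc1.1], lt_of_le_of_lt hc1.2 ht.2⟩
      exact hnz c hcmem hc2
    · exact absurd hzero (hnz t ht)
    · exact hposn

lemma integral_pos_of_nonneg_of_pos_left {f : ℝ → ℝ} {a b : ℝ} (hab : a < b)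
    (hf : Continuous f) (h0 : ∀ t ∈ Set.Icc a b, 0 ≤ f t)
    (hfa : 0 < f a) : 0 < ∫ t in a..b, f t := by
  set F : ℝ → ℝ := fun x => ∫ t in a..x, f t with hF
  have hFa : HasDerivAt F (f a) a :=
    intervalIntegral.integral_hasDerivAt_right
      (hf.intervalIntegrable a a) (hf.stronglyMeasurableAtFilter _ _) hf.continuousAt
  have hF0 : F a = 0 := intervalIntegral.integral_same
  obtain ⟨δ, hδ, hpos⟩ := pos_right_of_deriv_pos hFa hF0 hfa
  set x := min (a + δ / 2) ((a + b) / 2) with hx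
  have hx1 : a < x := by apply lt_min <;> linarith
  have hx2 : x < a + δ := by
    calc x ≤ a + δ/2 := min_le_left _ _
      _ < a + δ := by linarith
  have hxb : x ≤ b := by
    calc x ≤ (a+b)/2 := min_le_right _ _
      _ ≤ b := by linarith
  have hFx : 0 < F x := hpos x ⟨hx1, hx2⟩
  have hsplit : F x + ∫ t in x..b, f t = ∫ t in a..b, f t :=
    intervalIntegral.integral_add_adjacent_intervals (hf.intervalIntegrable _ _)
      (hf.intervalIntegrable _ _)
  have hrest : 0 ≤ ∫ t in x..b, f t := by
    apply intervalIntegral.integral_nonneg hxb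
    intro t ht
    exact h0 t ⟨le_trans hx1.le ht.1, ht.2⟩
  linarith

lemma backward_uniqueness {p B u u' : ℝ → ℝ} {s T : ℝ}
    (hp : Continuous p) (hB : Continuous B) (hppos : ∀ t, 0 < p t)
    (hu : ∀ t, HasDerivAt u (u' t) t)
    (hode : ∀ t, HasDerivAt (fun τ => p τ * u' τ) (B t * u t) t)
    (hsT : s < T) (huT : u T = 0) (hu'T : u' T = 0) :
    u s = 0 ∧ p s * u' s = 0 := by
  obtain ⟨tm, htm, hmin⟩ := isCompact_Icc.exists_isMinOn (f := p)
    (Set.nonempty_Icc.2 hsT.le) hp.continuousOn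
  have hpm : 0 < p tm := hppos tm
  obtain ⟨C, hC⟩ := isCompact_Icc (a := s) (b := T) |>.exists_bound_of_continuousOn hB.continuousOn
  have hC0 : 0 ≤ C := le_trans (norm_nonneg (B s)) (hC s ⟨le_rfl, hsT.le⟩)
  set K : ℝ := max (p tm)⁻¹ C with hK
  set v : ℝ → ℝ × ℝ := fun t => (u (s + T - t), p (s + T - t) * u' (s + T - t)) with hv
  set v' : ℝ → ℝ × ℝ := fun t => (-u' (s + T - t), -(B (s + T - t) * u (s + T - t))) with hv'
  have haff : ∀ t : ℝ, HasDerivAt (fun τ : ℝ => s + T - τ) (-1) t := by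
    intro t
    simpa using ((hasDerivAt_id t).const_sub (s + T))
  have hvderiv : ∀ t, HasDerivAt v (v' t) t := by
    intro t
    have h1 : HasDerivAt (fun τ => u (s + T - τ)) (u' (s + T - t) * (-1)) t :=
      (hu (s + T - t)).comp t (haff t)
    have h2 : HasDerivAt (fun τ => p (s + T - τ) * u' (s + T - τ))
        (B (s + T - t) * u (s + T - t) * (-1)) t :=
      (hode (s + T - t)).comp t (haff t)
    have := h1.prodMk h2
    simp only [mul_neg_one] at this
    exact this
  have hbound : ∀ t ∈ Set.Ico s T, ‖v' t‖ ≤ K * ‖v t‖ + 0 := by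
    intro t ht
    have hσ : s + T - t ∈ Set.Icc s T := ⟨by linarith [ht.2], by linarith [ht.1]⟩
    set σ := s + T - t with hσdef
    rw [add_zero]
    have hnv : ‖v t‖ = max ‖u σ‖ ‖p σ * u' σ‖ := rfl
    have hnv' : ‖v' t‖ = max ‖-u' σ‖ ‖-(B σ * u σ)‖ := rfl
    rw [hnv, hnv']
    set M := max ‖u σ‖ ‖p σ * u' σ‖ with hM
    have hM0 : (0:ℝ) ≤ M := le_trans (norm_nonneg _) (le_max_left _ _)
    apply max_le
    · rw [norm_neg]
      have hpσ : 0 < p σ := hppos σ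
      have h1 : ‖u' σ‖ * p tm ≤ M := by
        calc ‖u' σ‖ * p tm ≤ ‖u' σ‖ * p σ :=
              mul_le_mul_of_nonneg_left (hmin hσ) (norm_nonneg _)
          _ = ‖p σ * u' σ‖ := by
              rw [norm_mul, Real.norm_eq_abs (p σ), abs_of_pos hpσ]; ring
          _ ≤ M := le_max_right _ _
      calc ‖u' σ‖ = (p tm)⁻¹ * (‖u' σ‖ * p tm) := by field_simp
        _ ≤ (p tm)⁻¹ * M := mul_le_mul_of_nonneg_left h1 (by positivity)
        _ ≤ K * M := mul_le_mul_of_nonneg_right (le_max_left _ _) hM0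
    · rw [norm_neg, norm_mul]
      calc ‖B σ‖ * ‖u σ‖ ≤ C * ‖u σ‖ := mul_le_mul_of_nonneg_right (hC σ hσ) (norm_nonneg _)
        _ ≤ C * M := mul_le_mul_of_nonneg_left (le_max_left _ _) hC0
        _ ≤ K * M := mul_le_mul_of_nonneg_right (le_max_right _ _) hM0
  have hcu : Continuous u := by
    rw [continuous_iff_continuousAt]; exact fun t => (hu t).continuousAt
  have hcpu' : Continuous (fun τ => p τ * u' τ) := by
    rw [continuous_iff_continuousAt]; exact fun t => (hode t).continuousAt
  have haffc : Continuous (fun τ : ℝ => s + T - τ) := by continuity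
  have hvc : Continuous v := (hcu.comp haffc).prodMk (hcpu'.comp haffc)
  have hvs : ‖v s‖ ≤ 0 := by
    have : v s = (0, 0) := by
      simp only [hv]
      rw [show s + T - s = T by ring, huT, hu'T]
      simp
    rw [this]; simp
  have hfinal := norm_le_gronwallBound_of_norm_deriv_right_le (δ := 0) (K := K) (ε := 0)
    hvc.continuousOn (fun x _ => (hvderiv x).hasDerivWithinAt) hvs hbound
  have hvT := hfinal T ⟨hsT.le, le_rfl⟩
  rw [gronwallBound_ε0_δ0] at hvT
  have hvT0 : v T = 0 := norm_le_zero_iff.1 hvT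
  have h1 : v T = (u s, p s * u' s) := by
    simp only [hv, show s + T - T = s by ring]
  rw [h1, Prod.ext_iff] at hvT0
  exact ⟨hvT0.1, hvT0.2⟩

/-- For fixed `s`, the zero-function `a ↦ φ_a(s)` is decreasing for
`a ≥ 0`: if `0 ≤ a₁ < a₂` and `φ_{a₁}(s)` is finite, then `φ_{a₂}(s)` is finite as
well and `φ_{a₂}(s) < φ_{a₁}(s)` (strict inequality when both are finite).
Here `uᵢ` solves `-(p u')' + q u = aᵢ·m·u` with `uᵢ(s) = 0`, `uᵢ'(s) = 1/p(s)`. -/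
theorem zero_function_decreasing_in_a
    (p q m : ℝ → ℝ) (a₁ a₂ s : ℝ) (u₁ u₁' u₂ u₂' : ℝ → ℝ)
    (hp : Continuous p) (hq : Continuous q) (hm : Continuous m)
    (hppos : ∀ t, 0 < p t) (hqnn : ∀ t, 0 ≤ q t)
    (hu₁s : u₁ s = 0) (hu₁'s : u₁' s = 1 / p s)
    (hderiv₁ : ∀ t, HasDerivAt u₁ (u₁' t) t)
    (hODE₁ : ∀ t, HasDerivAt (fun τ => p τ * u₁' τ) (q t * u₁ t - a₁ * m t * u₁ t) t)
    (hu₂s : u₂ s = 0) (hu₂'s : u₂' s = 1 / p s)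
    (hderiv₂ : ∀ t, HasDerivAt u₂ (u₂' t) t)
    (hODE₂ : ∀ t, HasDerivAt (fun τ => p τ * u₂' τ) (q t * u₂ t - a₂ * m t * u₂ t) t)
    (ha₁ : 0 ≤ a₁) (ha : a₁ < a₂)
    (hne₁ : {t | s < t ∧ u₁ t = 0}.Nonempty) :
    {t | s < t ∧ u₂ t = 0}.Nonempty ∧
      sInf {t | s < t ∧ u₂ t = 0} < sInf {t | s < t ∧ u₁ t = 0} := by
  -- continuity facts
  have cu₁ : Continuous u₁ := continuous_iff_continuousAt.2 fun t => (hderiv₁ t).continuousAt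
  have cu₂ : Continuous u₂ := continuous_iff_continuousAt.2 fun t => (hderiv₂ t).continuousAt
  have cpu₁ : Continuous (fun t => p t * u₁' t) :=
    continuous_iff_continuousAt.2 fun t => (hODE₁ t).continuousAt
  have cpu₂ : Continuous (fun t => p t * u₂' t) :=
    continuous_iff_continuousAt.2 fun t => (hODE₂ t).continuousAt
  have hpne : ∀ t, p t ≠ 0 := fun t => (hppos t).ne'
  have cu₁' : Continuous u₁' := by
    have h : u₁' = fun t => (p t * u₁' t) / p t := by
      funext t; exact (mul_div_cancel_left₀ _ (hpne t)).symm
    rw [h]; exact cpu₁.div hp hpne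
  have cu₂' : Continuous u₂' := by
    have h : u₂' = fun t => (p t * u₂' t) / p t := by
      funext t; exact (mul_div_cancel_left₀ _ (hpne t)).symm
    rw [h]; exact cpu₂.div hp hpne
  have hps : 0 < 1 / p s := by have := hppos s; positivity
  have hd₁ : HasDerivAt u₁ (1 / p s) s := hu₁'s ▸ hderiv₁ s
  have hd₂ : HasDerivAt u₂ (1 / p s) s := hu₂'s ▸ hderiv₂ s
  set Z₁ := {t | s < t ∧ u₁ t = 0} with hZ₁
  set T := sInf Z₁ with hT
  obtain ⟨δ₁, hδ₁, hpos₁⟩ := pos_right_of_deriv_pos hd₁ hu₁s hps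
  have hlb : ∀ t ∈ Z₁, s + δ₁ ≤ t := by
    intro t ht
    by_contra hlt
    push_neg at hlt
    exact absurd ht.2 (ne_of_gt (hpos₁ t ⟨ht.1, hlt⟩))
  have hbdd : BddBelow Z₁ := ⟨s + δ₁, hlb⟩
  have hTδ : s + δ₁ ≤ T := le_csInf hne₁ hlb
  have hsT : s < T := by linarith
  have hu₁T : u₁ T = 0 := by
    have hclos : T ∈ closure Z₁ := csInf_mem_closure hne₁ hbdd
    have hsub : closure Z₁ ⊆ u₁ ⁻¹' {0} :=
      closure_minimal (fun t ht => ht.2) (isClosed_singleton.preimage cu₁)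
    exact hsub hclos
  have hTmin : ∀ t ∈ Z₁, T ≤ t := fun t ht => csInf_le hbdd ht
  have hnz₁ : ∀ t ∈ Set.Ioo s T, u₁ t ≠ 0 := fun t ht h0 =>
    absurd (hTmin t ⟨ht.1, h0⟩) (not_le.2 ht.2)
  have hu₁pos : ∀ t ∈ Set.Ioo s T, 0 < u₁ t := pos_on_Ioo cu₁ hd₁ hu₁s hps hnz₁
  -- the energy identity
  set A : ℝ := ∫ t in s..T, m t * u₁ t ^ 2 with hA
  have hQA : (∫ t in s..T, (p t * u₁' t ^ 2 + q t * u₁ t ^ 2 - a₁ * (m t * u₁ t ^ 2))) = 0 := by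
    have hFTC := intervalIntegral.integral_eq_sub_of_hasDerivAt (a := s) (b := T)
      (f := fun t => u₁ t * (p t * u₁' t))
      (f' := fun t => p t * u₁' t ^ 2 + q t * u₁ t ^ 2 - a₁ * (m t * u₁ t ^ 2)) ?_ ?_
    · rw [hFTC, hu₁T, hu₁s]; ring
    · intro t _
      have h := (hderiv₁ t).fun_mul (hODE₁ t)
      refine h.congr_deriv ?_; ring
    · exact (((hp.mul (cu₁'.pow 2)).add (hq.mul (cu₁.pow 2))).sub
        (continuous_const.mul (hm.mul (cu₁.pow 2)))).intervalIntegrable _ _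
  have hIpos : 0 < ∫ t in s..T, p t * u₁' t ^ 2 := by
    apply integral_pos_of_nonneg_of_pos_left hsT (hp.mul (cu₁'.pow 2))
    · intro t _
      exact mul_nonneg (hppos t).le (sq_nonneg _)
    · show 0 < p s * u₁' s ^ 2
      rw [hu₁'s]
      have he : p s * (1 / p s) ^ 2 = 1 / p s := by
        field_simp
      rw [he]; exact hps
  have hint1 : IntervalIntegrable (fun t => p t * u₁' t ^ 2 + q t * u₁ t ^ 2)
      MeasureTheory.volume s T :=
    ((hp.mul (cu₁'.pow 2)).add (hq.mul (cu₁.pow 2))).intervalIntegrable _ _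
  have hint2 : IntervalIntegrable (fun t => a₁ * (m t * u₁ t ^ 2))
      MeasureTheory.volume s T :=
    (continuous_const.mul (hm.mul (cu₁.pow 2))).intervalIntegrable _ _
  have hsplit : (∫ t in s..T, (p t * u₁' t ^ 2 + q t * u₁ t ^ 2 - a₁ * (m t * u₁ t ^ 2)))
      = (∫ t in s..T, (p t * u₁' t ^ 2 + q t * u₁ t ^ 2)) - a₁ * A := by
    rw [intervalIntegral.integral_sub hint1 hint2, intervalIntegral.integral_const_mul]
  have hint3 : IntervalIntegrable (fun t => p t * u₁' t ^ 2) MeasureTheory.volume s T :=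
    (hp.mul (cu₁'.pow 2)).intervalIntegrable _ _
  have hmono1 : (∫ t in s..T, p t * u₁' t ^ 2) ≤ ∫ t in s..T, (p t * u₁' t ^ 2 + q t * u₁ t ^ 2) := by
    apply intervalIntegral.integral_mono_on hsT.le hint3 hint1
    intro x _
    have : 0 ≤ q x * u₁ x ^ 2 := mul_nonneg (hqnn x) (sq_nonneg _)
    linarith
  have hQApos : 0 < a₁ * A := by
    have : (∫ t in s..T, (p t * u₁' t ^ 2 + q t * u₁ t ^ 2)) - a₁ * A = 0 := by
      rw [← hsplit]; exact hQA
    linarith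
  have ha₁pos : 0 < a₁ := by
    rcases ha₁.lt_or_eq with h | h
    · exact h
    · exfalso; rw [← h, zero_mul] at hQApos; exact lt_irrefl 0 hQApos
  have hApos : 0 < A := by
    by_contra hA0
    push_neg at hA0
    nlinarith
  -- the key contradiction argument
  have hzero₂ : ∃ t₀ ∈ Set.Ioo s T, u₂ t₀ = 0 := by
    by_contra hcon
    push_neg at hcon
    have hnz₂ : ∀ t ∈ Set.Ioo s T, u₂ t ≠ 0 := hcon
    have hu₂pos : ∀ t ∈ Set.Ioo s T, 0 < u₂ t := pos_on_Ioo cu₂ hd₂ hu₂s hps hnz₂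
    set g : ℝ → ℝ := fun t => (a₂ - a₁) * (m t * u₁ t ^ 2) with hg
    have cg : Continuous g := continuous_const.mul (hm.mul (cu₁.pow 2))
    set G : ℝ → ℝ := fun t => u₁ t * (p t * u₁' t) - u₁ t ^ 2 / u₂ t * (p t * u₂' t) with hG
    set G' : ℝ → ℝ := fun t => g t + p t * (u₁' t - u₂' t * u₁ t / u₂ t) ^ 2 with hG'
    have hGd : ∀ t, u₂ t ≠ 0 → HasDerivAt G (G' t) t := by
      intro t ht
      have h1 : HasDerivAt (fun τ => u₁ τ * (p τ * u₁' τ))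
          (u₁' t * (p t * u₁' t) + u₁ t * (q t * u₁ t - a₁ * m t * u₁ t)) t :=
        (hderiv₁ t).mul (hODE₁ t)
      have h2 : HasDerivAt (fun τ => u₁ τ ^ 2) (2 * u₁ t * u₁' t) t := by
        have := (hderiv₁ t).fun_pow 2
        simpa [mul_comm] using this
      have h3 : HasDerivAt (fun τ => u₁ τ ^ 2 / u₂ τ)
          ((2 * u₁ t * u₁' t * u₂ t - u₁ t ^ 2 * u₂' t) / u₂ t ^ 2) t :=
        h2.div (hderiv₂ t) ht
      have h4 := h3.fun_mul (hODE₂ t)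
      have h5 := h1.fun_sub h4
      refine h5.congr_deriv ?_
      simp only [hG', hg]
      field_simp
      ring
    -- J and its continuity
    set J : ℝ → ℝ := fun x => ∫ t in x..T, g t with hJ
    have hJder : ∀ x : ℝ, HasDerivAt (fun y => ∫ t in T..y, g t) (g x) x := fun x =>
      intervalIntegral.integral_hasDerivAt_right (cg.intervalIntegrable _ _)
        (cg.stronglyMeasurableAtFilter _ _) cg.continuousAt
    have hJeq : ∀ x, J x = -(∫ t in T..x, g t) := fun x =>
      intervalIntegral.integral_symm T x
    have hJcont : Continuous J := by
      have : Continuous (fun y => ∫ t in T..y, g t) :=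
        continuous_iff_continuousAt.2 fun x => (hJder x).continuousAt
      have h2 := this.neg
      exact h2.congr fun x => (hJeq x).symm
    have hJT : J T = 0 := intervalIntegral.integral_same
    have hJs : J s = (a₂ - a₁) * A := intervalIntegral.integral_const_mul _ _
    have hJspos : 0 < J s := by
      rw [hJs]
      exact mul_pos (by linarith) hApos
    -- key inequality
    have key : ∀ c ∈ Set.Ioo s T, ∀ d ∈ Set.Ioo s T, c ≤ d → J c - J d ≤ G d - G c := by
      intro c hc d hd hcd
      have hsub : Set.Icc c d ⊆ Set.Ioo s T := fun x hx =>
        ⟨lt_of_lt_of_le hc.1 hx.1, lt_of_le_of_lt hx.2 hd.2⟩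
      have hcontG' : ContinuousOn G' (Set.Icc c d) := by
        apply ContinuousOn.add cg.continuousOn
        apply ContinuousOn.mul hp.continuousOn
        apply ContinuousOn.pow
        apply ContinuousOn.sub cu₁'.continuousOn
        exact ContinuousOn.div (cu₂'.mul cu₁).continuousOn cu₂.continuousOn
          (fun x hx => hnz₂ x (hsub hx))
      have hint : IntervalIntegrable G' MeasureTheory.volume c d :=
        hcontG'.intervalIntegrable_of_Icc hcd
      have hFTC : (∫ t in c..d, G' t) = G d - G c := by
        apply intervalIntegral.integral_eq_sub_of_hasDerivAt
        · intro t ht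
          rw [Set.uIcc_of_le hcd] at ht
          exact hGd t (hnz₂ t (hsub ht))
        · exact hint
      have hmono : (∫ t in c..d, g t) ≤ ∫ t in c..d, G' t := by
        apply intervalIntegral.integral_mono_on hcd (cg.intervalIntegrable _ _) hint
        intro x _
        have h0 : 0 ≤ p x * (u₁' x - u₂' x * u₁ x / u₂ x) ^ 2 :=
          mul_nonneg (hppos x).le (sq_nonneg _)
        simp only [hG']
        linarith
      have hadj : (∫ t in c..d, g t) + (∫ t in d..T, g t) = ∫ t in c..T, g t :=
        intervalIntegral.integral_add_adjacent_intervals (cg.intervalIntegrable _ _)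
          (cg.intervalIntegrable _ _)
      have hJcd : J c - J d = ∫ t in c..d, g t := by
        simp only [hJ]
        linarith
      linarith [hFTC ▸ hmono]
    -- Tendsto of G at s from the right
    have hmem_s : Set.Ioo s T ∈ 𝓝[>] s := Ioo_mem_nhdsGT_of_mem ⟨le_refl s, hsT⟩
    have hGs : Tendsto G (𝓝[>] s) (𝓝 0) := by
      have hmono_f : 𝓝[>] s ≤ 𝓝[≠] s :=
        nhdsWithin_mono s fun x hx => Set.mem_compl_singleton_iff.2 (ne_of_gt hx)
      have hsl₁ : Tendsto (slope u₁ s) (𝓝[>] s) (𝓝 (1 / p s)) := by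
        have := hasDerivAt_iff_tendsto_slope.1 hd₁
        exact this.mono_left hmono_f
      have hsl₂ : Tendsto (slope u₂ s) (𝓝[>] s) (𝓝 (1 / p s)) := by
        have := hasDerivAt_iff_tendsto_slope.1 hd₂
        exact this.mono_left hmono_f
      have hratio : Tendsto (fun c => u₁ c / u₂ c) (𝓝[>] s) (𝓝 1) := by
        have hdiv := hsl₁.div hsl₂ (ne_of_gt hps)
        have heq : (1 / p s) / (1 / p s) = 1 := div_self (ne_of_gt hps)
        rw [heq] at hdiv
        apply hdiv.congr'
        filter_upwards [hmem_s] with c hc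
        have hcs : c - s ≠ 0 := sub_ne_zero.2 (ne_of_gt hc.1)
        simp only [Pi.div_apply, slope_def_field, hu₁s, hu₂s, sub_zero]
        rw [div_div_div_cancel_right₀ hcs]
      have t1 : Tendsto (fun c => u₁ c * (p c * u₁' c)) (𝓝[>] s)
          (𝓝 (u₁ s * (p s * u₁' s))) :=
        ((cu₁.mul (hp.mul cu₁')).tendsto s).mono_left nhdsWithin_le_nhds
      have t2 : Tendsto (fun c => u₁ c * (u₁ c / u₂ c) * (p c * u₂' c)) (𝓝[>] s)
          (𝓝 (u₁ s * 1 * (p s * u₂' s))) := by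
        apply Tendsto.mul
        · exact Tendsto.mul ((cu₁.tendsto s).mono_left nhdsWithin_le_nhds) hratio
        · exact ((hp.mul cu₂').tendsto s).mono_left nhdsWithin_le_nhds
      have t3 := t1.sub t2
      rw [hu₁s] at t3
      simp only [zero_mul, sub_zero, zero_sub, neg_zero] at t3
      apply t3.congr'
      filter_upwards [hmem_s] with c _
      simp only [hG]
      rw [sq, mul_div_assoc]
    -- Tendsto of G at T from the left
    have hmem_T : Set.Ioo s T ∈ 𝓝[<] T := Ioo_mem_nhdsLT_of_mem ⟨hsT, le_refl T⟩
    have hGT : Tendsto G (𝓝[<] T) (𝓝 0) := by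
      by_cases hu₂T : u₂ T = 0
      · -- need u₂' T ≠ 0, else backward uniqueness contradiction
        by_cases hu₂'T : u₂' T = 0
        · exfalso
          have hBU := backward_uniqueness (B := fun t => q t - a₂ * m t) hp
            (hq.sub (continuous_const.mul hm)) hppos hderiv₂
            (fun t => by convert hODE₂ t using 1; ring) hsT hu₂T hu₂'T
          have : p s * u₂' s = 1 := by
            rw [hu₂'s, mul_one_div, div_self (hpne s)]
          rw [this] at hBU
          exact one_ne_zero hBU.2
        · have hmono_f : 𝓝[<] T ≤ 𝓝[≠] T :=
            nhdsWithin_mono T fun x hx => Set.mem_compl_singleton_iff.2 (ne_of_lt hx)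
          have hsl₁ : Tendsto (slope u₁ T) (𝓝[<] T) (𝓝 (u₁' T)) :=
            (hasDerivAt_iff_tendsto_slope.1 (hderiv₁ T)).mono_left hmono_f
          have hsl₂ : Tendsto (slope u₂ T) (𝓝[<] T) (𝓝 (u₂' T)) :=
            (hasDerivAt_iff_tendsto_slope.1 (hderiv₂ T)).mono_left hmono_f
          have hratio : Tendsto (fun d => u₁ d / u₂ d) (𝓝[<] T) (𝓝 (u₁' T / u₂' T)) := by
            have hdiv := hsl₁.div hsl₂ hu₂'T
            apply hdiv.congr'
            filter_upwards [hmem_T] with d hd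
            have hdT : d - T ≠ 0 := sub_ne_zero.2 (ne_of_lt hd.2)
            simp only [Pi.div_apply, slope_def_field, hu₁T, hu₂T, sub_zero]
            rw [div_div_div_cancel_right₀ hdT]
          have t1 : Tendsto (fun d => u₁ d * (p d * u₁' d)) (𝓝[<] T)
              (𝓝 (u₁ T * (p T * u₁' T))) :=
            ((cu₁.mul (hp.mul cu₁')).tendsto T).mono_left nhdsWithin_le_nhds
          have t2 : Tendsto (fun d => u₁ d * (u₁ d / u₂ d) * (p d * u₂' d)) (𝓝[<] T)
              (𝓝 (u₁ T * (u₁' T / u₂' T) * (p T * u₂' T))) := by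
            apply Tendsto.mul
            · exact Tendsto.mul ((cu₁.tendsto T).mono_left nhdsWithin_le_nhds) hratio
            · exact ((hp.mul cu₂').tendsto T).mono_left nhdsWithin_le_nhds
          have t3 := t1.sub t2
          rw [hu₁T] at t3
          simp only [zero_mul, sub_zero, zero_sub, neg_zero] at t3
          apply t3.congr'
          filter_upwards [hmem_T] with d _
          simp only [hG]
          rw [sq, mul_div_assoc]
      · -- G is continuous at T with G T = 0
        have hcontGT : ContinuousAt G T := by
          apply ContinuousAt.sub
          · exact (cu₁.mul (hp.mul cu₁')).continuousAt
          · exact (((cu₁.pow 2).continuousAt).div cu₂.continuousAt hu₂T).mul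
              (hp.mul cu₂').continuousAt
        have hGT0 : G T = 0 := by simp [hG, hu₁T]
        have := hcontGT.continuousWithinAt (s := Set.Iio T)
        rw [ContinuousWithinAt, hGT0] at this
        exact this
    -- step 1: J s - J d ≤ G d for all d in Ioo s T
    have step1 : ∀ d ∈ Set.Ioo s T, J s - J d ≤ G d := by
      intro d hd
      have hmemd : Set.Ioo s d ∈ 𝓝[>] s := Ioo_mem_nhdsGT_of_mem ⟨le_refl s, hd.1⟩
      have hev : ∀ᶠ c in 𝓝[>] s, G c + (J c - J d) ≤ G d := by
        filter_upwards [hmemd] with c hc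
        have hcmem : c ∈ Set.Ioo s T := ⟨hc.1, lt_trans hc.2 hd.2⟩
        have := key c hcmem d hd hc.2.le
        linarith
      have hlim : Tendsto (fun c => G c + (J c - J d)) (𝓝[>] s) (𝓝 (0 + (J s - J d))) := by
        apply hGs.add
        exact (((hJcont.tendsto s).mono_left nhdsWithin_le_nhds).sub tendsto_const_nhds)
      have := le_of_tendsto hlim hev
      linarith
    -- step 2: conclude J s ≤ 0
    have hfin : J s ≤ 0 := by
      have hlim2 : Tendsto (fun d => J s - J d) (𝓝[<] T) (𝓝 (J s - J T)) :=
        tendsto_const_nhds.sub ((hJcont.tendsto T).mono_left nhdsWithin_le_nhds)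
      rw [hJT, sub_zero] at hlim2
      apply le_of_tendsto_of_tendsto hlim2 hGT
      filter_upwards [hmem_T] with d hd
      exact step1 d hd
    linarith
  obtain ⟨t₀, ht₀, hu₂t₀⟩ := hzero₂
  have hZ₂ne : Set.Nonempty {t | s < t ∧ u₂ t = 0} := ⟨t₀, ht₀.1, hu₂t₀⟩
  refine ⟨hZ₂ne, ?_⟩
  have hbdd₂ : BddBelow {t | s < t ∧ u₂ t = 0} := ⟨s, fun x hx => hx.1.le⟩
  calc sInf {t | s < t ∧ u₂ t = 0} ≤ t₀ := csInf_le hbdd₂ ⟨ht₀.1, hu₂t₀⟩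
    _ < T := ht₀.2
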